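/- Euclidean version of Proposition 3.11: let o, x, y, z be points in the Euclidean plane with o ∉ {x,y,z}. If π ≤ ∠yox + ∠xoz, then for every point p on the segment [o, x], ‖y - o‖ + ‖o - z‖ ≤ ‖y - p‖ + ‖p - z‖. -/
import Mathlib


open EuclideanGeometry Real
open scoped RealInnerProductSpace

theorem stmt_7 (o x y z : EuclideanSpace ℝ (Fin 2))
    (hox : o ≠ x) (hoy : o ≠ y) (hoz : o ≠ z)
    (h : π ≤ ∠ y o x + ∠ x o z) :
    ∀ p ∈ segment ℝ o x, ‖y - o‖ + ‖o - z‖ ≤ ‖y - p‖ + ‖p - z‖ := by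
  rintro p ⟨s, t, hs, ht, hst, rfl⟩
  have hyp : y - (s • o + t • x) = (y - o) - t • (x - o) := by
    have hs' : s = 1 - t := by linarith
    subst hs'; module
  have hzp : (s • o + t • x) - z = -((z - o) - t • (x - o)) := by
    have hs' : s = 1 - t := by linarith
    subst hs'; module
  have hA : (0:ℝ) < ‖y - o‖ := by
    rw [norm_pos_iff]; exact sub_ne_zero.mpr (Ne.symm hoy)
  have hB : (0:ℝ) < ‖z - o‖ := by
    rw [norm_pos_iff]; exact sub_ne_zero.mpr (Ne.symm hoz)
  have hW : (0:ℝ) < ‖x - o‖ := by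
    rw [norm_pos_iff]; exact sub_ne_zero.mpr (Ne.symm hox)
  have hcos : Real.cos (∠ y o x) + Real.cos (∠ x o z) ≤ 0 := by
    have h2 := EuclideanGeometry.angle_le_pi y o x
    have h3 := EuclideanGeometry.angle_nonneg x o z
    have h4 := EuclideanGeometry.angle_le_pi x o z
    have h5 := Real.cos_le_cos_of_nonneg_of_le_pi
      (by linarith : (0:ℝ) ≤ π - ∠ x o z) h2 (by linarith)
    rw [Real.cos_pi_sub] at h5
    linarith
  have hc1 : Real.cos (∠ y o x) = ⟪y - o, x - o⟫ / (‖y - o‖ * ‖x - o‖) := by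
    rw [show (∠ y o x) = InnerProductGeometry.angle (y - o) (x - o) from by
      rw [EuclideanGeometry.angle, vsub_eq_sub, vsub_eq_sub]]
    exact InnerProductGeometry.cos_angle _ _
  have hc2 : Real.cos (∠ x o z) = ⟪x - o, z - o⟫ / (‖x - o‖ * ‖z - o‖) := by
    rw [show (∠ x o z) = InnerProductGeometry.angle (x - o) (z - o) from by
      rw [EuclideanGeometry.angle, vsub_eq_sub, vsub_eq_sub]]
    exact InnerProductGeometry.cos_angle _ _
  set ia := ⟪y - o, x - o⟫ with hia
  set ib := ⟪x - o, z - o⟫ with hib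
  have key : ia * ‖z - o‖ + ib * ‖y - o‖ ≤ 0 := by
    rw [hc1, hc2] at hcos
    rw [div_add_div _ _ (by positivity) (by positivity), div_nonpos_iff] at hcos
    rcases hcos with ⟨_, h6⟩ | ⟨h6, _⟩
    · nlinarith [mul_pos (mul_pos hA hW) (mul_pos hW hB)]
    · nlinarith [hW]
  have h1 : ‖y - o‖ ^ 2 - t * ia ≤ ‖(y - o) - t • (x - o)‖ * ‖y - o‖ := by
    have := real_inner_le_norm ((y - o) - t • (x - o)) (y - o)
    rw [inner_sub_left, real_inner_smul_left, real_inner_self_eq_norm_sq,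
      real_inner_comm (y - o) (x - o)] at this
    linarith
  have h2 : ‖z - o‖ ^ 2 - t * ib ≤ ‖(z - o) - t • (x - o)‖ * ‖z - o‖ := by
    have := real_inner_le_norm ((z - o) - t • (x - o)) (z - o)
    rw [inner_sub_left, real_inner_smul_left, real_inner_self_eq_norm_sq] at this
    linarith
  rw [hyp, hzp, norm_neg, norm_sub_rev o z]
  have hkt : t * (ia * ‖z - o‖ + ib * ‖y - o‖) ≤ 0 :=
    mul_nonpos_of_nonneg_of_nonpos ht key
  nlinarith [mul_le_mul_of_nonneg_left h1 hB.le, mul_le_mul_of_nonneg_left h2 hA.le,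
    mul_pos hA hB]
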